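/- Let k be an infinite field, p a closed separable point of affine n-space Aⁿ over k of degree m with n ≥ 2. Then there exists a linear coordinate x₁ on Aⁿ such that the induced map of residue fields k(x₁(p)) → k(p) is an isomorphism, where x₁(p) is the image of p under the projection x₁: Aⁿ → A¹. -/

import Mathlib

/-- Let `k` be an infinite field and `p` a closed separable point of affine
`n`-space `𝔸ⁿ` over `k` (`n ≥ 2`) of degree `m`.  Then there is a linear coordinate `x₁` on
`𝔸ⁿ` (an affine-linear polynomial, i.e. of total degree at most `1`) such that the induced
map of residue fields `k(x₁(p)) → k(p)` is an isomorphism.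

A closed point of `𝔸ⁿ_k` is a maximal ideal `p` of `k[x_1, …, x_n]`; its residue field is
`k[x_1, …, x_n] ⧸ p`.  The residue field of the image point `x₁(p) ∈ 𝔸¹` is the subfield of
`k(p)` generated over `k` by the image of `x₁`; the map of residue fields is an isomorphism
precisely when this image generates all of `k(p)` over `k`. -/
theorem stmt_11 (k : Type*) [Field k] [Infinite k] (n m : ℕ) (hn : 2 ≤ n)
    (p : Ideal (MvPolynomial (Fin n) k)) [hp : p.IsMaximal]
    (hsep : Algebra.IsSeparable k (MvPolynomial (Fin n) k ⧸ p))
    (hdeg : Module.finrank k (MvPolynomial (Fin n) k ⧸ p) = m) :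
    ∃ f : MvPolynomial (Fin n) k, f.totalDegree ≤ 1 ∧
      Algebra.adjoin k {Ideal.Quotient.mk p f} = ⊤ := by
  classical
  set L := MvPolynomial (Fin n) k ⧸ p with hL
  letI : Field L := Ideal.Quotient.field p
  -- `L` is a finitely generated `k`-algebra which is a field, hence finite over `k` (Zariski)
  haveI : Algebra.FiniteType k L :=
    Algebra.FiniteType.of_surjective (Ideal.Quotient.mkₐ k p)
      (Ideal.Quotient.mkₐ_surjective k p)
  haveI : Module.Finite k L := finite_of_finite_type_of_isJacobsonRing k L
  haveI : Algebra.IsIntegral k L := Algebra.IsIntegral.of_finite k L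
  haveI : Algebra.IsAlgebraic k L := Algebra.IsAlgebraic.of_finite k L
  haveI : Finite (IntermediateField k L) :=
    Field.finite_intermediateField_of_exists_primitive_element k L
      (Field.exists_primitive_element k L)
  -- the images of the coordinates generate `L` as a `k`-algebra
  set a : Fin n → L := fun i => Ideal.Quotient.mkₐ k p (MvPolynomial.X i) with ha
  have htop : Algebra.adjoin k (Set.range a) = ⊤ := by
    have h1 : Set.range a
        = (Ideal.Quotient.mkₐ k p) '' (Set.range (MvPolynomial.X : Fin n → _)) := by
      rw [← Set.range_comp]; rfl
    rw [h1, ← AlgHom.map_adjoin, MvPolynomial.adjoin_range_X, Algebra.map_top,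
      (AlgHom.range_eq_top _).mpr (Ideal.Quotient.mkₐ_surjective k p)]
  -- the span of the images of the coordinates
  set V : Submodule k L := Submodule.span k (Set.range a) with hV
  -- there is a primitive element inside `V`
  have hmain : ∃ v ∈ V, Algebra.adjoin k {v} = ⊤ := by
    by_contra hno
    push_neg at hno
    -- each element of `V` lies in a proper intermediate field
    have hcover : ⋃ (M : {M : IntermediateField k L // M ≠ ⊤}),
        ((Submodule.comap V.subtype
          (Subalgebra.toSubmodule M.1.toSubalgebra) : Submodule k V) : Set V) = Set.univ := by
      ext v
      simp only [Set.mem_univ, iff_true, Set.mem_iUnion]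
      refine ⟨⟨IntermediateField.adjoin k {(v : L)}, ?_⟩, ?_⟩
      · intro htoph
        apply hno (v : L) v.2
        have := congrArg IntermediateField.toSubalgebra htoph
        rwa [IntermediateField.adjoin_simple_toSubalgebra_of_isAlgebraic
          (Algebra.IsIntegral.isIntegral _).isAlgebraic, IntermediateField.top_toSubalgebra] at this
      · exact IntermediateField.mem_adjoin_simple_self k (v : L)
    obtain ⟨⟨M, hM⟩, hMtop⟩ := Subspace.exists_eq_top_of_iUnion_eq_univ hcover
    -- then `V ⊆ M`, so the coordinates all lie in `M`, contradicting `M ≠ ⊤`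
    apply hM
    have hVM : ∀ x ∈ V, x ∈ M := by
      intro x hx
      have : (⟨x, hx⟩ : V) ∈ (⊤ : Submodule k V) := trivial
      rw [← hMtop] at this
      exact this
    have hle : Algebra.adjoin k (Set.range a) ≤ M.toSubalgebra := by
      apply Algebra.adjoin_le
      rintro x ⟨i, rfl⟩
      exact hVM _ (Submodule.subset_span ⟨i, rfl⟩)
    rw [htop, top_le_iff] at hle
    exact IntermediateField.toSubalgebra_injective
      (by rw [hle, IntermediateField.top_toSubalgebra])
  obtain ⟨v, hvV, hv⟩ := hmain
  rw [hV, Submodule.mem_span_range_iff_exists_fun] at hvV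
  obtain ⟨c, hc⟩ := hvV
  refine ⟨∑ i, c i • MvPolynomial.X i, ?_, ?_⟩
  · refine le_trans (MvPolynomial.totalDegree_finset_sum _ _) (Finset.sup_le fun i _ => ?_)
    exact le_trans (MvPolynomial.totalDegree_smul_le _ _)
      (le_of_eq (MvPolynomial.totalDegree_X i))
  · have : Ideal.Quotient.mk p (∑ i, c i • MvPolynomial.X i) = v := by
      rw [← hc, ← Ideal.Quotient.mkₐ_eq_mk k p, map_sum]
      simp only [map_smul, ha]
    rw [this, hv]
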